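/- For every integer n ≥ 2, the function t ↦ t^(−1)·(t^n − 1)/(t^(n−1) − 1) is strictly decreasing on (1, ∞), and its limit as t → 1⁺ equals n/(n−1). -/

import Mathlib

theorem stmt_6 (n : ℕ) (hn : 2 ≤ n) :
    StrictAntiOn (fun t : ℝ => t⁻¹ * ((t ^ n - 1) / (t ^ (n - 1) - 1))) (Set.Ioi 1) ∧
      Filter.Tendsto (fun t : ℝ => t⁻¹ * ((t ^ n - 1) / (t ^ (n - 1) - 1)))
        (nhdsWithin 1 (Set.Ioi 1)) (nhds ((n : ℝ) / ((n : ℝ) - 1))) := by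
  set m := n - 1 with hm
  have hm1 : 1 ≤ m := by omega
  have hnm : n = m + 1 := by omega
  -- key pointwise identity
  have key : ∀ t : ℝ, t ∈ Set.Ioi 1 →
      t⁻¹ * ((t ^ n - 1) / (t ^ m - 1)) = 1 + (t * ∑ k ∈ Finset.range m, t ^ k)⁻¹ := by
    intro t ht
    have ht1 : (1:ℝ) < t := ht
    have ht0 : t ≠ 0 := by linarith
    have hS : 0 < ∑ k ∈ Finset.range m, t ^ k := by
      apply Finset.sum_pos (fun i _ => by positivity)
      exact Finset.nonempty_range_iff.mpr (by omega)
    have hS0 : (∑ k ∈ Finset.range m, t ^ k) ≠ 0 := ne_of_gt hS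
    have ht1' : t - 1 ≠ 0 := sub_ne_zero.mpr (ne_of_gt ht1)
    have hA : t ^ n - 1 = (∑ i ∈ Finset.range n, t ^ i) * (t - 1) := (geom_sum_mul t n).symm
    have hB : t ^ m - 1 = (∑ i ∈ Finset.range m, t ^ i) * (t - 1) := (geom_sum_mul t m).symm
    have hSplit : ∑ i ∈ Finset.range n, t ^ i
        = t * (∑ i ∈ Finset.range m, t ^ i) + 1 := by
      rw [hnm, Finset.sum_range_succ']
      simp only [pow_succ, pow_zero]
      rw [← Finset.sum_mul]
      ring
    rw [hA, hB, hSplit]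
    rw [mul_div_mul_right _ _ ht1', inv_mul_eq_div, div_div, add_div, mul_comm (∑ i ∈ Finset.range m, t ^ i) t, div_self (mul_ne_zero ht0 hS0), one_div]
  set g : ℝ → ℝ := fun t => 1 + (t * ∑ k ∈ Finset.range m, t ^ k)⁻¹ with hg
  have hgmono : StrictAntiOn g (Set.Ioi 1) := by
    intro a ha b hb hab
    have ha1 : (1:ℝ) < a := ha
    have hb1 : (1:ℝ) < b := hb
    have hSa : 0 < ∑ k ∈ Finset.range m, a ^ k := by
      apply Finset.sum_pos (fun i _ => by positivity)
      exact Finset.nonempty_range_iff.mpr (by omega)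
    have hle : (∑ k ∈ Finset.range m, a ^ k) ≤ ∑ k ∈ Finset.range m, b ^ k :=
      Finset.sum_le_sum fun i _ => pow_le_pow_left₀ (by linarith) (le_of_lt hab) i
    have hlt : a * ∑ k ∈ Finset.range m, a ^ k < b * ∑ k ∈ Finset.range m, b ^ k :=
      mul_lt_mul hab hle hSa (by linarith)
    have hpos : 0 < a * ∑ k ∈ Finset.range m, a ^ k := mul_pos (by linarith) hSa
    have := inv_strictAnti₀ hpos hlt
    simp only [hg]
    linarith
  constructor
  · intro a ha b hb hab
    have h1 := key a ha
    have h2 := key b hb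
    simp only [Set.mem_Ioi] at *
    rw [h1, h2]
    exact hgmono ha hb hab
  · have hScont : Continuous fun t : ℝ => ∑ k ∈ Finset.range m, t ^ k :=
      continuous_finset_sum _ fun i _ => continuous_pow i
    have hden : (1:ℝ) * ∑ k ∈ Finset.range m, (1:ℝ) ^ k ≠ 0 := by
      simp only [one_pow, Finset.sum_const, Finset.card_range, nsmul_eq_mul, mul_one, one_mul]
      exact_mod_cast (by omega : m ≠ 0)
    have hcont : ContinuousAt g 1 :=
      continuousAt_const.add ((continuousAt_id.mul hScont.continuousAt).inv₀ hden)
    have hval : g 1 = (n : ℝ) / ((n : ℝ) - 1) := by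
      have hcast : ((n:ℝ) - 1) = (m:ℝ) := by
        rw [hm, Nat.cast_sub (by omega : 1 ≤ n)]; simp
      have hm0 : (m:ℝ) ≠ 0 := by exact_mod_cast (by omega : m ≠ 0)
      simp only [hg, one_pow, Finset.sum_const, Finset.card_range, nsmul_eq_mul, mul_one, one_mul]
      rw [hcast, hnm]
      push_cast
      field_simp
    have hgt : Filter.Tendsto g (nhdsWithin 1 (Set.Ioi 1)) (nhds ((n : ℝ) / ((n : ℝ) - 1))) := by
      rw [← hval]
      exact (hcont.tendsto).mono_left nhdsWithin_le_nhds
    refine hgt.congr' ?_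
    filter_upwards [self_mem_nhdsWithin] with t ht
    exact (key t ht).symm
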